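/- Let S be a finite type of cardinality n, let A be a Hermitian complex matrix indexed by S × S with eigenvalues λ_1^↓(A) ≥ … ≥ λ_n^↓(A) arranged in decreasing order, let 1 ≤ d ≤ n, and let v_1, …, v_d ∈ ℂ^S be an orthonormal family of vectors. Then Σ_{i=1}^d ⟨v_i, A v_i⟩ ≤ Σ_{i=1}^d λ_i^↓(A). -/

import Mathlib

open Matrix
open scoped ComplexOrder Kronecker Classical

/-- Sum of the `d` largest eigenvalues (with multiplicity, decreasing order)
of a Hermitian matrix. -/
noncomputable def sumTopEigs {n : Type*} [Fintype n] [DecidableEq n]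
    {A : Matrix n n ℂ} (hA : A.IsHermitian) (d : ℕ) : ℝ :=
  ((((Finset.univ.val.map hA.eigenvalues).sort (· ≤ ·)).reverse.take d)).sum

/-- `ε^(d)(A) = 1 - Σ_{i=1}^d λ_i^↓(A)` for Hermitian `A` (junk value `0` otherwise). -/
noncomputable def epsD {n : Type*} [Fintype n] [DecidableEq n]
    (A : Matrix n n ℂ) (d : ℕ) : ℝ :=
  if h : A.IsHermitian then 1 - sumTopEigs h d else 0

/-- `|ψ⟩⟨ψ|`. -/
noncomputable def outer {n : Type*} (ψ : n → ℂ) : Matrix n n ℂ :=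
  fun i j => ψ i * star (ψ j)

/-- Partial trace over the second tensor factor. -/
noncomputable def ptraceR {S R : Type*} [Fintype R] (M : Matrix (S × R) (S × R) ℂ) :
    Matrix S S ℂ :=
  fun s s' => ∑ r, M (s, r) (s', r)

/-- Partial trace over the third tensor factor. -/
noncomputable def ptrace3 {S R A : Type*} [Fintype A] (M : Matrix (S × R × A) (S × R × A) ℂ) :
    Matrix (S × R) (S × R) ℂ :=
  fun p q => ∑ a, M (p.1, p.2, a) (q.1, q.2, a)

/-- Partial trace over the second (middle) tensor factor. -/
noncomputable def ptrace2 {S R A : Type*} [Fintype R] (M : Matrix (S × R × A) (S × R × A) ℂ) :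
    Matrix (S × A) (S × A) ℂ :=
  fun p q => ∑ r, M (p.1, r, p.2) (q.1, r, q.2)

/-- Partial trace over the second and third tensor factors. -/
noncomputable def ptrace23 {S R A : Type*} [Fintype R] [Fintype A]
    (M : Matrix (S × R × A) (S × R × A) ℂ) : Matrix S S ℂ :=
  fun s s' => ∑ r, ∑ a, M (s, r, a) (s', r, a)

/-- Convex-roof extension `E^(d)_{S|R}`: the infimum over all finite pure-state
convex decompositions `ρ = Σ_k p_k |ψ_k⟩⟨ψ_k|` of `Σ_k p_k ε^(d)(tr_R |ψ_k⟩⟨ψ_k|)`. -/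
noncomputable def convRoofE {S R : Type*} [Fintype S] [Fintype R] [DecidableEq S]
    (d : ℕ) (ρ : Matrix (S × R) (S × R) ℂ) : ℝ :=
  sInf { e : ℝ | ∃ (m : ℕ) (p : Fin m → ℝ) (ψ : Fin m → (S × R → ℂ)),
    (∀ k, 0 ≤ p k) ∧ (∑ k, p k = 1) ∧
    (∀ k, star (ψ k) ⬝ᵥ ψ k = 1) ∧
    (ρ = ∑ k, (p k : ℂ) • outer (ψ k)) ∧
    e = ∑ k, p k * epsD (ptraceR (outer (ψ k))) d }

/-- Classical correlations `C^(d)_{S|A}`: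
`ε^(d)(tr_A ρ)` minus the infimum over all POVMs `{M_x}` on `A` of
`Σ_x p_x ε^(d)(p_x⁻¹ tr_A((1_S ⊗ M_x) ρ))`, where `p_x = tr((1_S ⊗ M_x) ρ)`
and terms with `p_x = 0` are omitted. -/
noncomputable def classC {S A : Type*} [Fintype S] [Fintype A] [DecidableEq S] [DecidableEq A]
    (d : ℕ) (ρ : Matrix (S × A) (S × A) ℂ) : ℝ :=
  epsD (ptraceR ρ) d -
  sInf { e : ℝ | ∃ (m : ℕ) (M : Fin m → Matrix A A ℂ),
    (∀ x, (M x).PosSemidef) ∧ (∑ x, M x = 1) ∧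
    e = ∑ x,
      (if (((1 : Matrix S S ℂ) ⊗ₖ M x) * ρ).trace = 0 then 0
       else ((((1 : Matrix S S ℂ) ⊗ₖ M x) * ρ).trace).re *
         epsD (((((1 : Matrix S S ℂ) ⊗ₖ M x) * ρ).trace)⁻¹ •
           ptraceR (((1 : Matrix S S ℂ) ⊗ₖ M x) * ρ)) d) }

/-- Cauchy interlacing / Ky Fan bound: for a Hermitian matrix `A` on a
finite type `S` of cardinality `n`, `1 ≤ d ≤ n`, and an orthonormal family
`v_1, …, v_d`, one has `Σ_{i=1}^d ⟨v_i, A v_i⟩ ≤ Σ_{i=1}^d λ_i^↓(A)`. -/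

private lemma ofFn_reverse' {α : Type*} {n : ℕ} (g : Fin n → α) :
    (List.ofFn g).reverse = List.ofFn (g ∘ Fin.rev) := by
  apply List.ext_getElem
  · simp
  · intro i h1 h2
    simp only [List.length_reverse, List.length_ofFn] at h1
    rw [List.getElem_reverse, List.getElem_ofFn, List.getElem_ofFn]
    congr 1
    ext
    simp only [List.length_ofFn, Fin.rev, Function.comp_apply]
    omega

private lemma weight_bound' {S : Type*} [Fintype S] [DecidableEq S]
    (f t : S → ℝ) (μ : ℝ) (T : Finset S) (d : ℕ) (hT : T.card = d)
    (ht0 : ∀ s, 0 ≤ t s) (ht1 : ∀ s, t s ≤ 1) (hsum : ∑ s, t s = d)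
    (hTμ : ∀ s ∈ T, μ ≤ f s) (hTc : ∀ s ∉ T, f s ≤ μ) :
    ∑ s, f s * t s ≤ ∑ s ∈ T, f s := by
  have key : ∑ s, (f s - μ) * t s ≤ ∑ s ∈ T, (f s - μ) := by
    rw [← Finset.sum_add_sum_compl T (fun s => (f s - μ) * t s)]
    have h1 : ∑ s ∈ T, (f s - μ) * t s ≤ ∑ s ∈ T, (f s - μ) := by
      apply Finset.sum_le_sum
      intro s hs
      nlinarith [hTμ s hs, ht0 s, ht1 s]
    have h2 : ∑ s ∈ Tᶜ, (f s - μ) * t s ≤ 0 := by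
      apply Finset.sum_nonpos
      intro s hs
      have := hTc s (Finset.mem_compl.mp hs)
      nlinarith [ht0 s]
    linarith
  have e1 : ∑ s, f s * t s = (∑ s, (f s - μ) * t s) + μ * d := by
    rw [← hsum, Finset.mul_sum, ← Finset.sum_add_distrib]
    apply Finset.sum_congr rfl
    intros; ring
  have e2 : ∑ s ∈ T, f s = (∑ s ∈ T, (f s - μ)) + μ * d := by
    rw [Finset.sum_sub_distrib, Finset.sum_const, hT, nsmul_eq_mul]
    ring
  linarith

private lemma exists_top_set' {S : Type*} [Fintype S] [DecidableEq S]
    {A : Matrix S S ℂ} (hA : A.IsHermitian) (d : ℕ) (hd1 : 1 ≤ d)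
    (hdn : d ≤ Fintype.card S) :
    ∃ (T : Finset S) (μ : ℝ), T.card = d ∧
      (∑ s ∈ T, hA.eigenvalues s) = sumTopEigs hA d ∧
      (∀ s ∈ T, μ ≤ hA.eigenvalues s) ∧ (∀ s ∉ T, hA.eigenvalues s ≤ μ) := by
  set n := Fintype.card S with hn
  set f : S → ℝ := hA.eigenvalues with hf
  have hn1 : 1 ≤ n := le_trans hd1 hdn
  set e0 : Fin n ≃ S := (Fintype.equivFin S).symm with he0
  set σ : Equiv.Perm (Fin n) := Tuple.sort (f ∘ e0) with hσ
  set e : Fin n ≃ S := σ.trans e0 with he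
  set h : Fin n → ℝ := f ∘ e with hh
  have hmono : Monotone h := by
    have := Tuple.monotone_sort (f ∘ e0)
    exact this
  have hperm : ((Finset.univ.val.map f : Multiset ℝ)) = ↑(List.ofFn h) := by
    rw [← Fin.univ_val_map h]
    conv_lhs => rw [← Finset.map_univ_equiv e]
    rw [Finset.map_val, Multiset.map_map]
    rfl
  have hsort : (Finset.univ.val.map f).sort (· ≤ ·) = List.ofFn h :=
    List.Perm.eq_of_pairwise' (Multiset.pairwise_sort _ _) hmono.sortedLE_ofFn.pairwise
      (Multiset.coe_eq_coe.mp (by rw [Multiset.sort_eq, hperm]))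
  have hsum : sumTopEigs hA d
      = ∑ j ∈ Finset.univ.filter (fun j : Fin n => j.val < d), h (Fin.rev j) := by
    rw [sumTopEigs, hsort, ofFn_reverse', List.sum_take_ofFn]
    rfl
  have himg : (Finset.univ.filter (fun j : Fin n => j.val < d)).image Fin.rev
      = Finset.univ.filter (fun i : Fin n => n - d ≤ i.val) := by
    ext i
    simp only [Finset.mem_image, Finset.mem_filter, Finset.mem_univ, true_and]
    constructor
    · rintro ⟨j, hj, rfl⟩
      simp only [Fin.val_rev]
      omega
    · intro hi
      exact ⟨Fin.rev i, by simp only [Fin.val_rev]; omega, Fin.rev_rev i⟩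
  have hsum2 : sumTopEigs hA d
      = ∑ i ∈ Finset.univ.filter (fun i : Fin n => n - d ≤ i.val), h i := by
    rw [hsum, ← himg, Finset.sum_image (fun a _ b _ hab => Fin.rev_injective hab)]
  set F : Finset (Fin n) := Finset.univ.filter (fun i : Fin n => n - d ≤ i.val) with hF
  have hcardF : F.card = d := by
    have hemb : Function.Injective (fun k : Fin d => (⟨n - d + k.val, by omega⟩ : Fin n)) := by
      intro a b hab
      have := congrArg Fin.val hab
      simp only at this
      exact Fin.ext (by omega)
    have : F = Finset.map ⟨_, hemb⟩ Finset.univ := by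
      ext i
      simp only [hF, Finset.mem_filter, Finset.mem_univ, true_and, Finset.mem_map,
        Function.Embedding.coeFn_mk]
      constructor
      · intro hi
        refine ⟨⟨i.val - (n - d), by omega⟩, Fin.ext ?_⟩
        simp only
        omega
      · rintro ⟨k, rfl⟩
        simp only
        omega
    rw [this, Finset.card_map, Finset.card_univ, Fintype.card_fin]
  refine ⟨F.image e, h ⟨n - d, by omega⟩, ?_, ?_, ?_, ?_⟩
  · rw [Finset.card_image_of_injective _ e.injective, hcardF]
  · rw [Finset.sum_image (fun a _ b _ hab => e.injective hab), hsum2]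
    exact Finset.sum_congr rfl (fun i _ => by rw [hh]; rfl)
  · rintro s hs
    rw [Finset.mem_image] at hs
    obtain ⟨i, hi, rfl⟩ := hs
    rw [hF, Finset.mem_filter] at hi
    exact hmono (by simpa [Fin.le_def] using hi.2)
  · intro s hs
    have hes : e (e.symm s) = s := e.apply_symm_apply s
    have hlt : (e.symm s).val < n - d := by
      by_contra hcon
      refine hs (Finset.mem_image.mpr ⟨e.symm s, ?_, hes⟩)
      rw [hF, Finset.mem_filter]
      exact ⟨Finset.mem_univ _, by omega⟩
    have hfs : f s = h (e.symm s) := by rw [hh]; simp [hes]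
    rw [hfs]
    exact hmono (by simp only [Fin.le_def]; omega)

private lemma bessel_bound' {S : Type*} [Fintype S] [DecidableEq S] {d : ℕ} {U : Matrix S S ℂ}
    (hUU : star U * U = 1)
    (v : Fin d → S → ℂ)
    (hortho : ∀ i j, star (v i) ⬝ᵥ v j = if i = j then 1 else 0)
    (w : Fin d → S → ℂ) (hw : w = fun i => star U *ᵥ v i) :
    (∀ s : S, (∑ i, Complex.normSq (w i s)) ≤ 1) := by
  set N : Matrix S (Fin d) ℂ := Matrix.of (fun s i => v i s) with hN
  have hNN : Nᴴ * N = 1 := by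
    ext i j
    have := hortho i j
    simpa [Matrix.mul_apply, Matrix.conjTranspose_apply, hN, Matrix.one_apply,
      dotProduct] using this
  set B : Matrix S S ℂ := 1 - N * Nᴴ with hB
  have hBH : Bᴴ = B := by
    simp [hB, Matrix.conjTranspose_sub, Matrix.conjTranspose_mul]
  have hBB : B * B = B := by
    have h4 : N * Nᴴ * (N * Nᴴ) = N * Nᴴ := by
      rw [Matrix.mul_assoc, ← Matrix.mul_assoc Nᴴ, hNN, Matrix.one_mul]
    rw [hB, Matrix.sub_mul, Matrix.mul_sub, Matrix.mul_sub, Matrix.one_mul, Matrix.mul_one, h4,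
      Matrix.one_mul]
    abel
  have hBpsd : B.PosSemidef := by
    have := Matrix.posSemidef_conjTranspose_mul_self B
    rwa [hBH, hBB] at this
  have hP : ((star U) * B * U).PosSemidef := by
    have := hBpsd.conjTranspose_mul_mul_same U
    rwa [← Matrix.star_eq_conjTranspose] at this
  set Q : Matrix S (Fin d) ℂ := star U * N with hQ
  have hid : star U * B * U = 1 - Q * Qᴴ := by
    rw [hB, Matrix.mul_sub, Matrix.mul_one, Matrix.sub_mul, hUU, hQ]
    congr 1
    rw [Matrix.conjTranspose_mul, Matrix.star_eq_conjTranspose, Matrix.conjTranspose_conjTranspose]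
    rw [Matrix.mul_assoc, Matrix.mul_assoc, Matrix.mul_assoc]
  have hQw : ∀ s i, Q s i = w i s := by
    intro s i
    simp [hQ, hw, Matrix.mul_apply, Matrix.mulVec, dotProduct, hN]
  intro s
  have h0 := hP.dotProduct_mulVec_nonneg (Pi.single s 1)
  have hentry : star (Pi.single s 1 : S → ℂ) ⬝ᵥ ((star U * B * U) *ᵥ Pi.single s 1)
      = (star U * B * U) s s := by
    simp [dotProduct, Matrix.mulVec, Pi.single_apply, apply_ite,
      Finset.mul_sum, mul_ite, ite_mul]
  rw [hentry, hid] at h0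
  have hdiag : ((1 : Matrix S S ℂ) - Q * Qᴴ) s s
      = ((1 - ∑ i, Complex.normSq (w i s) : ℝ) : ℂ) := by
    simp only [Matrix.sub_apply, Matrix.one_apply_eq, Matrix.mul_apply,
      Matrix.conjTranspose_apply, Complex.ofReal_sub, Complex.ofReal_one, Complex.ofReal_sum]
    congr 1
    apply Finset.sum_congr rfl
    intro i _
    rw [hQw, RCLike.star_def, Complex.mul_conj]
  rw [hdiag] at h0
  have := Complex.zero_le_real.mp h0
  linarith

theorem stmt0 {S : Type*} [Fintype S] [DecidableEq S] (A : Matrix S S ℂ)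
    (hA : A.IsHermitian) (d : ℕ) (hd1 : 1 ≤ d) (hdn : d ≤ Fintype.card S)
    (v : Fin d → S → ℂ)
    (hortho : ∀ i j, star (v i) ⬝ᵥ v j = if i = j then 1 else 0) :
    ∑ i, star (v i) ⬝ᵥ (A *ᵥ v i) ≤ ((sumTopEigs hA d : ℝ) : ℂ) := by
  set U : Matrix S S ℂ := (hA.eigenvectorUnitary : Matrix S S ℂ) with hU
  have hUU : star U * U = 1 := Unitary.coe_star_mul_self hA.eigenvectorUnitary
  have hUU' : U * star U = 1 :=
    (Matrix.mem_unitaryGroup_iff).mp (hA.eigenvectorUnitary).2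
  set w : Fin d → S → ℂ := fun i => star U *ᵥ v i with hw
  have hsw : ∀ i, star (w i) = star (v i) ᵥ* U := by
    intro i
    rw [hw]
    simp only
    rw [Matrix.star_mulVec, Matrix.star_eq_conjTranspose, Matrix.conjTranspose_conjTranspose]
  set t : S → ℝ := fun s => ∑ i, Complex.normSq (w i s) with ht
  have key : ∀ i, star (v i) ⬝ᵥ (A *ᵥ v i)
      = ∑ s, (hA.eigenvalues s : ℂ) * Complex.normSq (w i s) := by
    intro i
    conv_lhs => rw [hA.spectral_theorem, Unitary.conjStarAlgAut_apply]
    rw [← Matrix.mulVec_mulVec, ← Matrix.mulVec_mulVec, Matrix.dotProduct_mulVec, ← hsw]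
    simp only [Matrix.mulVec_diagonal, dotProduct, Pi.star_apply, Function.comp_apply]
    apply Finset.sum_congr rfl
    intro s _
    have : (starRingEnd ℂ) (w i s) * w i s = (Complex.normSq (w i s) : ℂ) :=
      Complex.normSq_eq_conj_mul_self.symm
    calc (starRingEnd ℂ) (w i s) * ((hA.eigenvalues s : ℂ) * w i s)
        = (hA.eigenvalues s : ℂ) * ((starRingEnd ℂ) (w i s) * w i s) := by ring
      _ = _ := by rw [this]
  have hwnorm : ∀ i, ∑ s, Complex.normSq (w i s) = 1 := by
    intro i
    have h1 : star (w i) ⬝ᵥ w i = 1 := by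
      rw [hsw, hw]
      simp only
      rw [← Matrix.dotProduct_mulVec, Matrix.mulVec_mulVec, hUU', Matrix.one_mulVec, hortho i i]
      simp
    have h2 : star (w i) ⬝ᵥ w i = ((∑ s, Complex.normSq (w i s) : ℝ) : ℂ) := by
      simp only [dotProduct, Pi.star_apply, Complex.ofReal_sum, RCLike.star_def]
      apply Finset.sum_congr rfl
      intro s _
      rw [← Complex.normSq_eq_conj_mul_self]
    rw [h1] at h2
    exact_mod_cast h2.symm
  have ht1 : ∀ s, t s ≤ 1 := bessel_bound' hUU v hortho w hw
  have ht0 : ∀ s, 0 ≤ t s := fun s => Finset.sum_nonneg fun i _ => Complex.normSq_nonneg _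
  have htsum : ∑ s, t s = d := by
    rw [ht]
    simp only
    rw [Finset.sum_comm]
    simp [hwnorm]
  obtain ⟨T, μ, hTcard, hTsum, hTμ, hTc⟩ := exists_top_set' hA d hd1 hdn
  have hreal : ∑ s, hA.eigenvalues s * t s ≤ sumTopEigs hA d := by
    rw [← hTsum]
    exact weight_bound' hA.eigenvalues t μ T d hTcard ht0 ht1 htsum hTμ hTc
  have hLHS : ∑ i, star (v i) ⬝ᵥ (A *ᵥ v i)
      = ((∑ s, hA.eigenvalues s * t s : ℝ) : ℂ) := by
    rw [Finset.sum_congr rfl (fun i _ => key i), Finset.sum_comm]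
    rw [Complex.ofReal_sum]
    apply Finset.sum_congr rfl
    intro s _
    rw [ht]
    push_cast
    rw [Finset.mul_sum]
  rw [hLHS]
  exact Complex.real_le_real.mpr hreal
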